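/- Let f : [0,1] → [0,1] be a continuous surjection with exactly n ≥ 3 surjective intervals A_1, …, A_n ordered from left to right. Then A_1 ∩ A_n = ∅, and f([l, r]) = [0,1] for every l ∈ A_1 and r ∈ A_n; more generally, f([l, r]) = [0,1] for every l ∈ A_i and r ∈ A_j whenever j − i ≥ 2. -/

import Mathlib

open Set Filter Topology

/-- A surjective interval of a map `f : [0,1] → [0,1]`: a closed interval `A ⊆ [0,1]` with
`f(A) = [0,1]` such that no proper closed subinterval of `A` maps onto `[0,1]`. -/
def SurjInterval (f : ℝ → ℝ) (A : Set ℝ) : Prop :=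
  ∃ a b : ℝ, a ≤ b ∧ A = Set.Icc a b ∧ A ⊆ Set.Icc 0 1 ∧
    f '' A = Set.Icc 0 1 ∧
    ∀ c d : ℝ, Set.Icc c d ⊂ A → f '' Set.Icc c d ≠ Set.Icc (0 : ℝ) 1

/-- The right accessible set of a surjective interval `A`:
`R(A) = {x ∈ A : f y ≠ f x for all y ∈ A with y > x}`. -/
def rightAccessible (f : ℝ → ℝ) (A : Set ℝ) : Set ℝ :=
  {x ∈ A | ∀ y ∈ A, x < y → f y ≠ f x}

lemma surj_props {f : ℝ → ℝ} {a b : ℝ} (h : SurjInterval f (Set.Icc a b)) :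
    a < b ∧ Set.Icc a b ⊆ Set.Icc 0 1 ∧ f '' Set.Icc a b = Set.Icc 0 1 ∧
    ∀ c d : ℝ, Set.Icc c d ⊂ Set.Icc a b → f '' Set.Icc c d ≠ Set.Icc (0 : ℝ) 1 := by
  obtain ⟨a', b', hab', heq, hsub, himg, hmin⟩ := h
  have hne : (Set.Icc a b).Nonempty := by rw [heq]; exact Set.nonempty_Icc.2 hab'
  have hab : a ≤ b := Set.nonempty_Icc.1 hne
  refine ⟨lt_of_le_of_ne hab ?_, hsub, himg, hmin⟩
  rintro rfl
  have h0 : (0 : ℝ) ∈ f '' Set.Icc a a := by rw [himg]; exact ⟨le_rfl, zero_le_one⟩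
  have h1 : (1 : ℝ) ∈ f '' Set.Icc a a := by rw [himg]; exact ⟨zero_le_one, le_rfl⟩
  simp only [Set.Icc_self, Set.image_singleton, Set.mem_singleton_iff] at h0 h1
  rw [← h0] at h1
  exact one_ne_zero h1

lemma key_endpoints {f : ℝ → ℝ} {a b : ℝ}
    (hfc : ContinuousOn f (Set.Icc 0 1)) (hfm : Set.MapsTo f (Set.Icc 0 1) (Set.Icc 0 1))
    (h : SurjInterval f (Set.Icc a b)) :
    (f a = 0 ∨ f a = 1) ∧ (∀ x ∈ Set.Ioc a b, f x ≠ f a) ∧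
    (f b = 0 ∨ f b = 1) ∧ (∀ x ∈ Set.Ico a b, f x ≠ f b) := by
  obtain ⟨hab, hsub, himg, hmin⟩ := surj_props h
  have h0m : (0 : ℝ) ∈ f '' Set.Icc a b := by rw [himg]; exact ⟨le_rfl, zero_le_one⟩
  have h1m : (1 : ℝ) ∈ f '' Set.Icc a b := by rw [himg]; exact ⟨zero_le_one, le_rfl⟩
  have claimL : ¬ ((0 : ℝ) ∈ f '' Set.Ioc a b ∧ (1 : ℝ) ∈ f '' Set.Ioc a b) := by
    rintro ⟨⟨x, hx, hfx⟩, ⟨y, hy, hfy⟩⟩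
    have ha' : a < min x y := lt_min hx.1 hy.1
    have hsubset : Set.Icc (min x y) b ⊆ Set.Icc a b := Set.Icc_subset_Icc ha'.le le_rfl
    have hconn : IsPreconnected (f '' Set.Icc (min x y) b) :=
      isPreconnected_Icc.image f (hfc.mono (hsubset.trans hsub))
    have h0 : (0 : ℝ) ∈ f '' Set.Icc (min x y) b := ⟨x, ⟨min_le_left _ _, hx.2⟩, hfx⟩
    have h1 : (1 : ℝ) ∈ f '' Set.Icc (min x y) b := ⟨y, ⟨min_le_right _ _, hy.2⟩, hfy⟩
    have himg' : f '' Set.Icc (min x y) b = Set.Icc 0 1 := by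
      refine Set.Subset.antisymm ?_ (hconn.Icc_subset h0 h1)
      rintro _ ⟨z, hz, rfl⟩
      exact hfm (hsub (hsubset hz))
    refine hmin (min x y) b ⟨hsubset, fun hcon => ?_⟩ himg'
    exact absurd (hcon ⟨le_rfl, hab.le⟩).1 (not_le.2 ha')
  have claimR : ¬ ((0 : ℝ) ∈ f '' Set.Ico a b ∧ (1 : ℝ) ∈ f '' Set.Ico a b) := by
    rintro ⟨⟨x, hx, hfx⟩, ⟨y, hy, hfy⟩⟩
    have hb' : max x y < b := max_lt hx.2 hy.2
    have hsubset : Set.Icc a (max x y) ⊆ Set.Icc a b := Set.Icc_subset_Icc le_rfl hb'.le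
    have hconn : IsPreconnected (f '' Set.Icc a (max x y)) :=
      isPreconnected_Icc.image f (hfc.mono (hsubset.trans hsub))
    have h0 : (0 : ℝ) ∈ f '' Set.Icc a (max x y) := ⟨x, ⟨hx.1, le_max_left _ _⟩, hfx⟩
    have h1 : (1 : ℝ) ∈ f '' Set.Icc a (max x y) := ⟨y, ⟨hy.1, le_max_right _ _⟩, hfy⟩
    have himg' : f '' Set.Icc a (max x y) = Set.Icc 0 1 := by
      refine Set.Subset.antisymm ?_ (hconn.Icc_subset h0 h1)
      rintro _ ⟨z, hz, rfl⟩
      exact hfm (hsub (hsubset hz))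
    refine hmin a (max x y) ⟨hsubset, fun hcon => ?_⟩ himg'
    exact absurd (hcon ⟨hab.le, le_rfl⟩).2 (not_le.2 hb')
  have left : (f a = 0 ∨ f a = 1) ∧ (∀ x ∈ Set.Ioc a b, f x ≠ f a) := by
    rcases not_and_or.1 claimL with hv | hv
    · obtain ⟨z, hz, hfz⟩ := h0m
      have hfa : f a = 0 := by
        rcases eq_or_lt_of_le hz.1 with heq | hlt
        · rw [← heq] at hfz; exact hfz
        · exact absurd ⟨z, ⟨hlt, hz.2⟩, hfz⟩ hv
      exact ⟨Or.inl hfa, fun x hx hcon => hv ⟨x, hx, by rw [hcon, hfa]⟩⟩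
    · obtain ⟨z, hz, hfz⟩ := h1m
      have hfa : f a = 1 := by
        rcases eq_or_lt_of_le hz.1 with heq | hlt
        · rw [← heq] at hfz; exact hfz
        · exact absurd ⟨z, ⟨hlt, hz.2⟩, hfz⟩ hv
      exact ⟨Or.inr hfa, fun x hx hcon => hv ⟨x, hx, by rw [hcon, hfa]⟩⟩
  have right : (f b = 0 ∨ f b = 1) ∧ (∀ x ∈ Set.Ico a b, f x ≠ f b) := by
    rcases not_and_or.1 claimR with hv | hv
    · obtain ⟨z, hz, hfz⟩ := h0m
      have hfb : f b = 0 := by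
        rcases eq_or_lt_of_le hz.2 with heq | hlt
        · rw [heq] at hfz; exact hfz
        · exact absurd ⟨z, ⟨hz.1, hlt⟩, hfz⟩ hv
      exact ⟨Or.inl hfb, fun x hx hcon => hv ⟨x, hx, by rw [hcon, hfb]⟩⟩
    · obtain ⟨z, hz, hfz⟩ := h1m
      have hfb : f b = 1 := by
        rcases eq_or_lt_of_le hz.2 with heq | hlt
        · rw [heq] at hfz; exact hfz
        · exact absurd ⟨z, ⟨hz.1, hlt⟩, hfz⟩ hv
      exact ⟨Or.inr hfb, fun x hx hcon => hv ⟨x, hx, by rw [hcon, hfb]⟩⟩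
  exact ⟨left.1, left.2, right.1, right.2⟩

/-- Two surjective intervals cannot properly overlap. -/
lemma no_overlap {f : ℝ → ℝ} {a b c d : ℝ}
    (hfc : ContinuousOn f (Set.Icc 0 1)) (hfm : Set.MapsTo f (Set.Icc 0 1) (Set.Icc 0 1))
    (h1 : SurjInterval f (Set.Icc a b)) (h2 : SurjInterval f (Set.Icc c d))
    (hac : a < c) (hbd : b < d) : b ≤ c := by
  by_contra hcb
  push_neg at hcb
  obtain ⟨hab, -, -, -⟩ := surj_props h1
  obtain ⟨hcd, -, -, -⟩ := surj_props h2
  obtain ⟨hva, hua, hvb, hub⟩ := key_endpoints hfc hfm h1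
  obtain ⟨hvc, -, -, -⟩ := key_endpoints hfc hfm h2
  have hfab : f b ≠ f a := hua b ⟨hab, le_rfl⟩
  have hfca : f c ≠ f a := hua c ⟨hac, hcb.le⟩
  have hfcb : f c ≠ f b := hub c ⟨hac.le, hcb⟩
  rcases hva with h | h <;> rcases hvb with h' | h' <;> rcases hvc with h'' | h'' <;>
    simp_all

/-- Let `f : [0,1] → [0,1]` be a continuous surjection with exactly `n ≥ 3`
surjective intervals `A i = [al i, ar i]`, ordered from left to right.  Then `A 0 ∩ A (n-1) = ∅`,
`f([l,r]) = [0,1]` for every `l ∈ A 0` and `r ∈ A (n-1)`, and more generally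
`f([l,r]) = [0,1]` whenever `l ∈ A i`, `r ∈ A j` and `j - i ≥ 2`. -/
theorem image_of_hull_of_separated_surjective_intervals
    (f : ℝ → ℝ)
    (hfc : ContinuousOn f (Set.Icc 0 1)) (hfm : Set.MapsTo f (Set.Icc 0 1) (Set.Icc 0 1))
    (hfs : f '' Set.Icc (0 : ℝ) 1 = Set.Icc (0 : ℝ) 1)
    (n : ℕ) (hn : 3 ≤ n) (al ar : Fin n → ℝ)
    (hord : StrictMono al) (hord' : StrictMono ar)
    (hA : ∀ i, SurjInterval f (Set.Icc (al i) (ar i)))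
    (hcomplete : ∀ B : Set ℝ, SurjInterval f B → ∃ i, B = Set.Icc (al i) (ar i)) :
    (Set.Icc (al ⟨0, by omega⟩) (ar ⟨0, by omega⟩) ∩
        Set.Icc (al ⟨n - 1, by omega⟩) (ar ⟨n - 1, by omega⟩) = ∅) ∧
    (∀ l ∈ Set.Icc (al ⟨0, by omega⟩) (ar ⟨0, by omega⟩),
      ∀ r ∈ Set.Icc (al ⟨n - 1, by omega⟩) (ar ⟨n - 1, by omega⟩),
        f '' Set.Icc l r = Set.Icc (0 : ℝ) 1) ∧
    ∀ i j : Fin n, (i : ℕ) + 2 ≤ (j : ℕ) →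
      ∀ l ∈ Set.Icc (al i) (ar i), ∀ r ∈ Set.Icc (al j) (ar j),
        f '' Set.Icc l r = Set.Icc (0 : ℝ) 1 := by
  -- separation: consecutive (and hence all later) intervals start after earlier ones end
  have sep : ∀ i j : Fin n, (i : ℕ) + 1 ≤ (j : ℕ) → ar i ≤ al j := by
    intro i j hij
    have hi1 : (i : ℕ) + 1 < n := lt_of_le_of_lt hij j.isLt
    have h1 : ar i ≤ al ⟨(i : ℕ) + 1, hi1⟩ := by
      refine no_overlap hfc hfm (hA i) (hA ⟨(i : ℕ) + 1, hi1⟩) ?_ ?_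
      · exact hord (by simp [Fin.lt_def])
      · exact hord' (by simp [Fin.lt_def])
    have h2 : al ⟨(i : ℕ) + 1, hi1⟩ ≤ al j := hord.monotone (by simp [Fin.le_def, hij])
    linarith
  -- main statement
  have main : ∀ i j : Fin n, (i : ℕ) + 2 ≤ (j : ℕ) →
      ∀ l ∈ Set.Icc (al i) (ar i), ∀ r ∈ Set.Icc (al j) (ar j),
        f '' Set.Icc l r = Set.Icc (0 : ℝ) 1 := by
    intro i j hij l hl r hr
    have hk : (i : ℕ) + 1 < n := by have := j.isLt; omega
    set k : Fin n := ⟨(i : ℕ) + 1, hk⟩ with hkdef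
    have hlk : l ≤ al k := le_trans hl.2 (sep i k (by simp [hkdef]))
    have hkr : ar k ≤ r := le_trans (sep k j (by simp [hkdef]; omega)) hr.1
    obtain ⟨-, hsubi, -, -⟩ := surj_props (hA i)
    obtain ⟨-, hsubj, -, -⟩ := surj_props (hA j)
    obtain ⟨-, -, himgk, -⟩ := surj_props (hA k)
    have hl0 : (0 : ℝ) ≤ l := (hsubi hl).1
    have hr1 : r ≤ 1 := (hsubj hr).2
    refine Set.Subset.antisymm ?_ ?_
    · rintro _ ⟨z, hz, rfl⟩
      exact hfm ⟨le_trans hl0 hz.1, le_trans hz.2 hr1⟩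
    · rw [← himgk]
      exact Set.image_mono (Set.Icc_subset_Icc hlk hkr)
  have h02 : (0 : ℕ) + 2 ≤ ((⟨n - 1, by omega⟩ : Fin n) : ℕ) := by
    show 0 + 2 ≤ n - 1; omega
  refine ⟨?_, fun l hl r hr => main ⟨0, by omega⟩ ⟨n - 1, by omega⟩ h02 l hl r hr, main⟩
  -- disjointness of the first and last intervals
  have hsep0 : ar ⟨0, by omega⟩ ≤ al ⟨1, by omega⟩ :=
    sep ⟨0, by omega⟩ ⟨1, by omega⟩ (by simp)
  have hsep1 : al (⟨1, by omega⟩ : Fin n) < al ⟨n - 1, by omega⟩ :=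
    hord (by simp [Fin.lt_def]; omega)
  apply Set.eq_empty_iff_forall_notMem.2
  rintro x ⟨hx1, hx2⟩
  have := hx1.2
  have := hx2.1
  linarith
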